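/- arXiv:1207.0115 — 3 statements merged into one kernel-verified Lean document; each statement's English description precedes it below -/
import Mathlib

section
/- Two bilinear symmetric nondegenerate forms g₁, g₂ of Lorentzian signature on a real 4-dimensional vector space have the same set of null vectors if and only if g₂ = λ·g₁ for some nonzero real λ. -/
open LinearMap (BilinForm)

/-- A symmetric bilinear form on a real vector space is Lorentzian (signature `(1,3)`,
possibly up to overall sign) if, up to a sign `ε = ±1`, it admits a basis `e₀,e₁,e₂,e₃`
with `ε·g(e₀,e₀) = 1`, `ε·g(eᵢ,eᵢ) = −1` for `i = 1,2,3`, and `g(eᵢ,eⱼ) = 0` for `i ≠ j`. -/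
def IsLorentzian {V : Type*} [AddCommGroup V] [Module ℝ V]
    (g : LinearMap.BilinForm ℝ V) : Prop :=
  ∃ (ε : ℝ) (e : Module.Basis (Fin 4) ℝ V), (ε = 1 ∨ ε = -1) ∧
    ∀ i j, ε * g (e i) (e j) = if i = j then (if i = 0 then 1 else -1) else 0

/-- Two symmetric nondegenerate bilinear forms of Lorentzian signature on a
real 4-dimensional vector space have the same set of null vectors if and only if
`g₂ = λ • g₁` for some nonzero real `λ`. -/
theorem stmt_2 (V : Type*) [AddCommGroup V] [Module ℝ V] [FiniteDimensional ℝ V]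
    (hdim : Module.finrank ℝ V = 4)
    (g₁ g₂ : LinearMap.BilinForm ℝ V)
    (hsymm₁ : ∀ x y, g₁ x y = g₁ y x) (hsymm₂ : ∀ x y, g₂ x y = g₂ y x)
    (hnd₁ : g₁.Nondegenerate) (hnd₂ : g₂.Nondegenerate)
    (hL₁ : IsLorentzian g₁) (hL₂ : IsLorentzian g₂) :
    ({v : V | g₁ v v = 0} = {v : V | g₂ v v = 0}) ↔ ∃ l : ℝ, l ≠ 0 ∧ g₂ = l • g₁ := by
  constructor
  · intro h
    obtain ⟨ε, e, hε, he⟩ := hL₁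
    have hε2 : ε * ε = 1 := by rcases hε with h'|h' <;> simp [h']
    have hεne : ε ≠ 0 := by rcases hε with h'|h' <;> simp [h']
    have hg1 : ∀ i j, g₁ (e i) (e j)
        = ε * (if i = j then (if i = 0 then (1:ℝ) else -1) else 0) := by
      intro i j
      rw [← he i j, ← mul_assoc, hε2, one_mul]
    have hnull : ∀ v, g₁ v v = 0 → g₂ v v = 0 := fun v hv => (Set.ext_iff.mp h v).mp hv
    set a := g₂ (e 0) (e 0) with ha_def
    have exp1 : ∀ (c : ℝ) (i j : Fin 4),
        g₁ (c • e 0 + e i + e j) (c • e 0 + e i + e j)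
        = c * c * g₁ (e 0) (e 0) + c * g₁ (e 0) (e i) + c * g₁ (e 0) (e j)
          + c * g₁ (e i) (e 0) + g₁ (e i) (e i) + g₁ (e i) (e j)
          + c * g₁ (e j) (e 0) + g₁ (e j) (e i) + g₁ (e j) (e j) := by
      intro c i j
      simp only [map_add, map_smul, LinearMap.add_apply, LinearMap.smul_apply,
        smul_eq_mul]
      ring
    have exp2 : ∀ (c : ℝ) (i j : Fin 4),
        g₂ (c • e 0 + e i + e j) (c • e 0 + e i + e j)
        = c * c * g₂ (e 0) (e 0) + c * g₂ (e 0) (e i) + c * g₂ (e 0) (e j)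
          + c * g₂ (e i) (e 0) + g₂ (e i) (e i) + g₂ (e i) (e j)
          + c * g₂ (e j) (e 0) + g₂ (e j) (e i) + g₂ (e j) (e j) := by
      intro c i j
      simp only [map_add, map_smul, LinearMap.add_apply, LinearMap.smul_apply,
        smul_eq_mul]
      ring
    -- from null vectors 2e₀ ± 2eᵢ :
    have key : ∀ i : Fin 4, i ≠ 0 → g₂ (e 0) (e i) = 0 ∧ g₂ (e i) (e i) = -a := by
      intro i hi
      have h0i : (0 : Fin 4) ≠ i := Ne.symm hi
      have h1 : g₁ ((2:ℝ) • e 0 + e i + e i) ((2:ℝ) • e 0 + e i + e i) = 0 := by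
        rw [exp1]; simp [hg1, hi, h0i]; ring
      have h2 : g₁ ((-2:ℝ) • e 0 + e i + e i) ((-2:ℝ) • e 0 + e i + e i) = 0 := by
        rw [exp1]; simp [hg1, hi, h0i]; ring
      have h1' := hnull _ h1
      have h2' := hnull _ h2
      rw [exp2] at h1' h2'
      rw [hsymm₂ (e i) (e 0)] at h1' h2'
      constructor <;> linarith
    -- off-diagonal, from null vector √2 e₀ + eᵢ + eⱼ :
    have hoff : ∀ i j : Fin 4, i ≠ 0 → j ≠ 0 → i ≠ j → g₂ (e i) (e j) = 0 := by
      intro i j hi hj hij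
      have h0i : (0 : Fin 4) ≠ i := Ne.symm hi
      have h0j : (0 : Fin 4) ≠ j := Ne.symm hj
      have hji : j ≠ i := Ne.symm hij
      have hs : Real.sqrt 2 * Real.sqrt 2 = 2 := Real.mul_self_sqrt (by norm_num)
      have h1 : g₁ ((Real.sqrt 2) • e 0 + e i + e j)
          ((Real.sqrt 2) • e 0 + e i + e j) = 0 := by
        rw [exp1]; simp [hg1, hi, hj, hij, hji, h0i, h0j]; ring
      have h1' := hnull _ h1
      rw [exp2] at h1'
      rw [hsymm₂ (e i) (e 0), hsymm₂ (e j) (e 0), hsymm₂ (e j) (e i),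
        (key i hi).1, (key j hj).1, (key i hi).2, (key j hj).2, hs] at h1'
      linarith
    -- g₂ on basis vectors equals a•η
    have hg2 : ∀ i j, g₂ (e i) (e j)
        = a * (if i = j then (if i = 0 then (1:ℝ) else -1) else 0) := by
      intro i j
      by_cases hi : i = 0
      · by_cases hj : j = 0
        · subst hi; subst hj; simp [ha_def]
        · subst hi; simp [hj, Ne.symm hj, (key j hj).1]
      · by_cases hj : j = 0
        · subst hj
          rw [hsymm₂]
          simp [hi, Ne.symm hi, (key i hi).1]
        · by_cases hij : i = j
          · subst hij
            simp [hi, (key i hi).2]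
          · simp [hij, hoff i j hi hj hij]
    -- a ≠ 0
    have ha : a ≠ 0 := by
      intro h0
      have : e 0 = 0 := by
        apply hnd₂.1
        intro y
        have hy := e.sum_repr y
        rw [Fin.sum_univ_four] at hy
        rw [← hy]
        simp only [map_add, map_smul, smul_eq_mul]
        have z : ∀ j : Fin 4, g₂ (e 0) (e j) = 0 := by
          intro j
          rw [hg2, h0, zero_mul]
        simp [z]
      exact e.ne_zero 0 this
    refine ⟨a * ε, mul_ne_zero ha hεne, ?_⟩
    apply e.ext
    intro i
    apply e.ext
    intro j
    simp only [LinearMap.smul_apply, smul_eq_mul]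
    rw [hg2, hg1, ← mul_assoc, mul_assoc a ε ε, hε2, mul_one]
  · rintro ⟨l, hl, rfl⟩
    ext v
    simp only [Set.mem_setOf_eq, LinearMap.smul_apply, smul_eq_mul]
    constructor
    · intro hv; simp [hv]
    · intro hv; rcases mul_eq_zero.mp hv with h'|h'
      · exact absurd h' hl
      · exact h'
end

section
/- Let F(a) = a³ + βa² − α²a − α²β − 2L²/π² with real parameters 0 < α ≤ β and L ≠ 0. Then F has exactly one real root A satisfying A > −α, and this root is positive. -/
open Real

/-- For `F(a) = a³ + βa² − α²a − α²β − 2L²/π²` with `0 < α ≤ β` and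
`L ≠ 0`, `F` has exactly one real root `A` with `A > −α`, and this root is positive. -/
theorem stmt_11 (α β L : ℝ) (hα : 0 < α) (hαβ : α ≤ β) (hL : L ≠ 0) :
    let F : ℝ → ℝ := fun a => a ^ 3 + β * a ^ 2 - α ^ 2 * a - α ^ 2 * β
      - 2 * L ^ 2 / π ^ 2
    (∃! A : ℝ, F A = 0 ∧ -α < A) ∧ ∀ A : ℝ, F A = 0 → -α < A → 0 < A := by
  intro F
  obtain ⟨c, hc, hceq⟩ : ∃ c : ℝ, 0 < c ∧ 2 * L ^ 2 / π ^ 2 = c := by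
    refine ⟨_, ?_, rfl⟩
    have h1 : 0 < π ^ 2 := by positivity
    have h2 : 0 < L ^ 2 := by positivity
    positivity
  have hfact : ∀ a : ℝ, F a = (a - α) * (a + α) * (a + β) - c := by
    intro a; simp only [F]; rw [hceq]; ring
  -- F < 0 on (-α, α]
  have hneg : ∀ a : ℝ, -α < a → a ≤ α → F a < 0 := by
    intro a h1 h2
    rw [hfact]
    have h3 : a - α ≤ 0 := by linarith
    have h4 : 0 < a + α := by linarith
    have h5 : 0 < a + β := by linarith
    have hprod : (a - α) * (a + α) * (a + β) ≤ 0 :=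
      mul_nonpos_of_nonpos_of_nonneg
        (mul_nonpos_of_nonpos_of_nonneg h3 h4.le) h5.le
    linarith
  -- strict mono on [α, ∞)
  have hmono : StrictMonoOn F (Set.Ici α) := by
    intro x hx y hy hxy
    simp only [Set.mem_Ici] at hx hy
    rw [hfact, hfact]
    have hS : 0 < x ^ 2 + x * y + y ^ 2 + β * (x + y) - α ^ 2 := by
      nlinarith [mul_le_mul hx hx hα.le (hα.le.trans hx),
        mul_le_mul hx hy hα.le (hα.le.trans hx)]
    have key : 0 < (y - x) * (x ^ 2 + x * y + y ^ 2 + β * (x + y) - α ^ 2) :=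
      mul_pos (by linarith) hS
    nlinarith [key]
  -- existence of a root in [α, M]
  set M : ℝ := α + 1 + c with hM
  have hαM : α ≤ M := by simp only [hM]; linarith
  have hFα : F α < 0 := by rw [hfact]; nlinarith
  have hFM : 0 < F M := by
    rw [hfact]
    have h1 : (1 : ℝ) + c ≤ M - α := by simp only [hM]; linarith
    have h2 : (1 : ℝ) ≤ M + α := by linarith
    have h3 : (1 : ℝ) ≤ M + β := by linarith
    nlinarith [mul_le_mul h2 h3 (by norm_num) (by linarith : (0:ℝ) ≤ M + α)]
  have hcont : ContinuousOn F (Set.Icc α M) := by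
    apply Continuous.continuousOn; simp only [F]; continuity
  obtain ⟨A, hAmem, hAroot⟩ : ∃ A ∈ Set.Icc α M, F A = 0 := by
    have := intermediate_value_Icc hαM hcont
    have h0 : (0 : ℝ) ∈ Set.Icc (F α) (F M) := ⟨le_of_lt hFα, le_of_lt hFM⟩
    obtain ⟨A, hA, hA0⟩ := this h0
    exact ⟨A, hA, hA0⟩
  have hAgt : α < A := by
    rcases lt_or_eq_of_le hAmem.1 with h | h
    · exact h
    · exfalso; rw [← h] at hAroot; linarith
  -- any root with -α < A is > α
  have hrootgt : ∀ B : ℝ, F B = 0 → -α < B → α < B := by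
    intro B hB h1
    by_contra h
    push_neg at h
    have := hneg B h1 h
    linarith
  constructor
  · refine ⟨A, ⟨hAroot, by linarith⟩, ?_⟩
    intro B ⟨hB, hBα⟩
    have hBgt := hrootgt B hB hBα
    rcases lt_trichotomy A B with h | h | h
    · have := hmono (Set.mem_Ici.mpr (le_of_lt hAgt)) (Set.mem_Ici.mpr (le_of_lt hBgt)) h
      rw [hAroot, hB] at this; linarith
    · exact h.symm
    · have := hmono (Set.mem_Ici.mpr (le_of_lt hBgt)) (Set.mem_Ici.mpr (le_of_lt hAgt)) h
      rw [hAroot, hB] at this; linarith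
  · intro B hB hBα
    have := hrootgt B hB hBα
    linarith
end

section
/- Let α > 0 and L̃₁, L̃₂ be real with (L̃₁, L̃₂) ≠ (0,0), set L̃² = L̃₁² + L̃₂², and define F(x) = x⁶ − 4α²x⁴ − L̃²x³ + (L̃₁² − L̃₂²)²/4. Then F has exactly two positive real roots if L̃₁² ≠ L̃₂², and exactly one positive real root if L̃₁² = L̃₂². -/
set_option maxHeartbeats 1000000


/-- Let `α > 0` and `(L̃₁, L̃₂) ≠ (0,0)`, `L̃² = L̃₁² + L̃₂²`, and
`F(x) = x⁶ − 4α²x⁴ − L̃²x³ + (L̃₁² − L̃₂²)²/4`. Then `F` has exactly two positive real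
roots if `L̃₁² ≠ L̃₂²`, and exactly one positive real root if `L̃₁² = L̃₂²`. -/
theorem stmt_13 (α L₁ L₂ : ℝ) (hα : 0 < α) (hL : (L₁, L₂) ≠ (0, 0)) :
    let F : ℝ → ℝ := fun x => x ^ 6 - 4 * α ^ 2 * x ^ 4 - (L₁ ^ 2 + L₂ ^ 2) * x ^ 3
      + (L₁ ^ 2 - L₂ ^ 2) ^ 2 / 4
    (L₁ ^ 2 ≠ L₂ ^ 2 → {x : ℝ | 0 < x ∧ F x = 0}.ncard = 2) ∧
      (L₁ ^ 2 = L₂ ^ 2 → ∃! x : ℝ, 0 < x ∧ F x = 0) := by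
  intro F
  have hF : ∀ x : ℝ, F x = x ^ 6 - 4 * α ^ 2 * x ^ 4 - (L₁ ^ 2 + L₂ ^ 2) * x ^ 3
      + (L₁ ^ 2 - L₂ ^ 2) ^ 2 / 4 := fun _ => rfl
  have hL2 : 0 < L₁ ^ 2 + L₂ ^ 2 := by
    rcases eq_or_ne L₁ 0 with h1 | h1
    · rcases eq_or_ne L₂ 0 with h2 | h2
      · exact absurd (by rw [h1, h2]) hL
      · positivity
    · positivity
  constructor
  · intro hne
    -- derivative of F
    have hF' : ∀ x : ℝ, HasDerivAt F
        (x ^ 2 * (6 * x ^ 3 - 16 * α ^ 2 * x - 3 * (L₁ ^ 2 + L₂ ^ 2))) x := by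
      intro x
      have h : HasDerivAt (fun y : ℝ => y ^ 6 - 4 * α ^ 2 * y ^ 4 - (L₁ ^ 2 + L₂ ^ 2) * y ^ 3
          + (L₁ ^ 2 - L₂ ^ 2) ^ 2 / 4)
          (((6 : ℕ) : ℝ) * x ^ 5 - 4 * α ^ 2 * (((4 : ℕ) : ℝ) * x ^ 3)
            - (L₁ ^ 2 + L₂ ^ 2) * (((3 : ℕ) : ℝ) * x ^ 2)) x := by
        exact (((hasDerivAt_pow 6 x).sub ((hasDerivAt_pow 4 x).const_mul _)).sub
          ((hasDerivAt_pow 3 x).const_mul _)).add_const _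
      convert h using 1
      push_cast; ring
    have hFc : Continuous F := by
      rw [continuous_iff_continuousAt]; exact fun x => (hF' x).continuousAt
    -- the critical point r
    set M : ℝ := 2 * α + (L₁ ^ 2 + L₂ ^ 2) + 1 with hM
    have hM0 : (0 : ℝ) ≤ M := by positivity
    have hpc : Continuous fun x : ℝ => 6 * x ^ 3 - 16 * α ^ 2 * x - 3 * (L₁ ^ 2 + L₂ ^ 2) := by
      continuity
    have hp0 : 6 * (0:ℝ) ^ 3 - 16 * α ^ 2 * 0 - 3 * (L₁ ^ 2 + L₂ ^ 2) < 0 := by nlinarith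
    have hpM : 0 < 6 * M ^ 3 - 16 * α ^ 2 * M - 3 * (L₁ ^ 2 + L₂ ^ 2) := by
      rw [hM]
      nlinarith [mul_pos hα hL2, mul_pos (mul_pos hα hα) hα, mul_pos (mul_pos hα hα) hL2,
        mul_pos (mul_pos hα hL2) hL2, mul_pos (mul_pos hL2 hL2) hL2, mul_pos hα hα,
        mul_pos hL2 hL2]
    obtain ⟨r, hrmem, hpr⟩ : ∃ r ∈ Set.Ioo (0:ℝ) M,
        6 * r ^ 3 - 16 * α ^ 2 * r - 3 * (L₁ ^ 2 + L₂ ^ 2) = 0 := by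
      have := intermediate_value_Ioo hM0 hpc.continuousOn
        (a := (0:ℝ))
      have h0 : (0:ℝ) ∈ Set.Ioo (6 * (0:ℝ) ^ 3 - 16 * α ^ 2 * 0 - 3 * (L₁ ^ 2 + L₂ ^ 2))
          (6 * M ^ 3 - 16 * α ^ 2 * M - 3 * (L₁ ^ 2 + L₂ ^ 2)) := ⟨hp0, hpM⟩
      obtain ⟨r, hr, hr0⟩ := this h0
      exact ⟨r, hr, hr0⟩
    obtain ⟨hr0, hrM⟩ := hrmem
    -- sign of the cubic left/right of r
    have hplt : ∀ x : ℝ, 0 < x → x < r →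
        6 * x ^ 3 - 16 * α ^ 2 * x - 3 * (L₁ ^ 2 + L₂ ^ 2) < 0 := by
      intro x hx hxr
      nlinarith [mul_pos hx hr0, mul_pos (mul_pos hx hr0) (add_pos hx hr0),
        mul_pos (sub_pos.2 hxr) (mul_pos (mul_pos hx hr0) (add_pos hx hr0))]
    have hpgt : ∀ x : ℝ, r < x →
        0 < 6 * x ^ 3 - 16 * α ^ 2 * x - 3 * (L₁ ^ 2 + L₂ ^ 2) := by
      intro x hxr
      have hx : 0 < x := hr0.trans hxr
      nlinarith [mul_pos hx hr0, mul_pos (mul_pos hx hr0) (add_pos hx hr0),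
        mul_pos (sub_pos.2 hxr) (mul_pos (mul_pos hx hr0) (add_pos hx hr0))]
    -- F r < 0
    have hFr : F r < 0 := by
      have key : 36 * F r = -(128 * α ^ 4 * r ^ 2) - 72 * α ^ 2 * (L₁ ^ 2 + L₂ ^ 2) * r
          - 36 * (L₁ * L₂) ^ 2 := by
        rw [hF]
        linear_combination (6 * r ^ 3 - 8 * α ^ 2 * r - 3 * (L₁ ^ 2 + L₂ ^ 2)) * hpr
      nlinarith [mul_pos (mul_pos (mul_pos hα hα) (mul_pos hα hα)) (mul_pos hr0 hr0),
        mul_pos (mul_pos hα hα) (mul_pos hL2 hr0), sq_nonneg (L₁ * L₂)]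
    -- monotonicity
    have hanti : StrictAntiOn F (Set.Icc 0 r) := by
      apply strictAntiOn_of_deriv_neg (convex_Icc 0 r) hFc.continuousOn
      intro x hx
      rw [interior_Icc] at hx
      rw [(hF' x).deriv]
      exact mul_neg_of_pos_of_neg (pow_pos hx.1 2) (hplt x hx.1 hx.2)
    have hmono : StrictMonoOn F (Set.Ici r) := by
      apply strictMonoOn_of_deriv_pos (convex_Ici r) hFc.continuousOn
      intro x hx
      rw [interior_Ici] at hx
      rw [(hF' x).deriv]
      exact mul_pos (pow_pos (hr0.trans hx) 2) (hpgt x hx)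
    -- F 0 > 0
    have hF0 : 0 < F 0 := by
      have h : L₁ ^ 2 - L₂ ^ 2 ≠ 0 := sub_ne_zero.2 hne
      rw [hF]
      norm_num
      positivity
    -- first root a ∈ (0, r)
    obtain ⟨a, hamem, hFa⟩ : ∃ a ∈ Set.Ioo (0:ℝ) r, F a = 0 := by
      have := intermediate_value_Ioo' hr0.le hFc.continuousOn
        (a := (0:ℝ)) (b := r)
      obtain ⟨a, ha, ha0⟩ := this ⟨hFr, hF0⟩
      exact ⟨a, ha, ha0⟩
    -- big point X with F X > 0
    obtain ⟨X, hX⟩ : ∃ X : ℝ, X = r + 4 * α ^ 2 + (L₁ ^ 2 + L₂ ^ 2) + 1 := ⟨_, rfl⟩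
    have hrX : r < X := by rw [hX]; nlinarith
    have hX0 : (0:ℝ) < X := hr0.trans hrX
    have hFX : 0 < F X := by
      rw [hF]
      have hXge : 4 * α ^ 2 + (L₁ ^ 2 + L₂ ^ 2) + 1 ≤ X := by
        rw [hX]; linarith
      have hX1 : (1:ℝ) ≤ X := by nlinarith [sq_nonneg α]
      have t1 : 0 ≤ X ^ 3 * (X - 1) :=
        mul_nonneg (pow_nonneg hX0.le 3) (by linarith)
      have t2 : 0 ≤ X * (X - 1) := mul_nonneg hX0.le (by linarith)
      have t3 : 1 ≤ X ^ 2 - 4 * α ^ 2 - (L₁ ^ 2 + L₂ ^ 2) := by nlinarith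
      have t4 : X ^ 4 * 1 ≤ X ^ 4 * (X ^ 2 - 4 * α ^ 2 - (L₁ ^ 2 + L₂ ^ 2)) :=
        mul_le_mul_of_nonneg_left t3 (pow_nonneg hX0.le 4)
      nlinarith [t4, mul_nonneg hL2.le t1, pow_pos hX0 4, sq_nonneg (L₁ ^ 2 - L₂ ^ 2)]
    -- second root b ∈ (r, X)
    obtain ⟨b, hbmem, hFb⟩ : ∃ b ∈ Set.Ioo r X, F b = 0 := by
      have := intermediate_value_Ioo hrX.le hFc.continuousOn
      obtain ⟨b, hb, hb0⟩ := this ⟨hFr, hFX⟩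
      exact ⟨b, hb, hb0⟩
    have hab : a ≠ b := ne_of_lt (hamem.2.trans hbmem.1)
    have hset : {x : ℝ | 0 < x ∧ F x = 0} = {a, b} := by
      ext x
      simp only [Set.mem_setOf_eq, Set.mem_insert_iff, Set.mem_singleton_iff]
      constructor
      · rintro ⟨hx0, hx⟩
        rcases lt_trichotomy x r with h | h | h
        · left
          exact hanti.injOn ⟨hx0.le, h.le⟩ ⟨hamem.1.le, hamem.2.le⟩ (by rw [hx, hFa])
        · exact absurd (h ▸ hx) (ne_of_lt hFr)
        · right
          exact hmono.injOn (Set.mem_Ici.2 h.le) (Set.mem_Ici.2 hbmem.1.le) (by rw [hx, hFb])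
      · rintro (rfl | rfl)
        · exact ⟨hamem.1, hFa⟩
        · exact ⟨hr0.trans hbmem.1, hFb⟩
    rw [hset, Set.ncard_pair hab]
  · intro heq
    have hc : (L₁ ^ 2 - L₂ ^ 2) ^ 2 / 4 = 0 := by rw [heq]; ring
    have hFq : ∀ x : ℝ, F x = x ^ 3 * (x ^ 3 - 4 * α ^ 2 * x - (L₁ ^ 2 + L₂ ^ 2)) := by
      intro x; rw [hF, hc]; ring
    -- root of the cubic
    set M : ℝ := 2 * α + (L₁ ^ 2 + L₂ ^ 2) + 1 with hM
    have hM0 : (0:ℝ) ≤ M := by positivity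
    have hqc : Continuous fun x : ℝ => x ^ 3 - 4 * α ^ 2 * x - (L₁ ^ 2 + L₂ ^ 2) := by
      continuity
    have hq0 : (0:ℝ) ^ 3 - 4 * α ^ 2 * 0 - (L₁ ^ 2 + L₂ ^ 2) < 0 := by nlinarith
    have hqM : 0 < M ^ 3 - 4 * α ^ 2 * M - (L₁ ^ 2 + L₂ ^ 2) := by
      rw [hM]
      nlinarith [mul_pos hα hL2, mul_pos (mul_pos hα hα) hα, mul_pos (mul_pos hα hα) hL2,
        mul_pos (mul_pos hα hL2) hL2, mul_pos (mul_pos hL2 hL2) hL2, mul_pos hα hα,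
        mul_pos hL2 hL2]
    obtain ⟨ρ, hρmem, hqρ⟩ : ∃ ρ ∈ Set.Ioo (0:ℝ) M,
        ρ ^ 3 - 4 * α ^ 2 * ρ - (L₁ ^ 2 + L₂ ^ 2) = 0 := by
      have := intermediate_value_Ioo hM0 hqc.continuousOn
      obtain ⟨ρ, hρ, hρ0⟩ := this ⟨hq0, hqM⟩
      exact ⟨ρ, hρ, hρ0⟩
    obtain ⟨hρ0, hρM⟩ := hρmem
    refine ⟨ρ, ⟨hρ0, by rw [hFq, hqρ, mul_zero]⟩, ?_⟩
    rintro y ⟨hy0, hFy⟩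
    have hqy : y ^ 3 - 4 * α ^ 2 * y - (L₁ ^ 2 + L₂ ^ 2) = 0 := by
      rw [hFq] at hFy
      rcases mul_eq_zero.1 hFy with h | h
      · exact absurd h (by positivity)
      · exact h
    rcases lt_trichotomy y ρ with h | h | h
    · exfalso
      nlinarith [mul_pos (sub_pos.2 h) (add_pos (mul_pos (mul_pos hy0 hρ0) (add_pos hy0 hρ0)) hL2)]
    · exact h
    · exfalso
      nlinarith [mul_pos (sub_pos.2 h) (add_pos (mul_pos (mul_pos hy0 hρ0) (add_pos hy0 hρ0)) hL2)]
end
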